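/- Let k be a positive integer, set ε = 1/(16√k), let d ≥ k, let S ⊆ {1,…,d} with |S| = k, and define y_S = (1/√k)·Σ_{j∈S} e_j ∈ ℝ^d, where e_1,…,e_d are the standard unit vectors. Let f be a map from {0, e_1, …, e_d, y_S} into ℝ^m with f(0) = 0 satisfying (1-ε)‖x-y‖₂² ≤ ‖f(x)-f(y)‖₂² ≤ (1+ε)‖x-y‖₂² for all x, y in {0, e_1, …, e_d, y_S}. Then for every j ∈ {1,…,d}: if j ∈ S then ⟨f(e_j), f(y_S)⟩ ≥ 12ε, and if j ∉ S then ⟨f(e_j), f(y_S)⟩ ≤ 4ε. -/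

import Mathlib

open scoped RealInnerProductSpace

/-- Gap preservation: with `ε = 1/(16√k)`, `S ⊆ {1,…,d}` of size `k`, and
`y_S = (1/√k) Σ_{j ∈ S} e_j`, any map `f` with `f 0 = 0` preserving squared pairwise
distances of `{0, e_1, …, e_d, y_S}` up to relative error `ε` satisfies
`⟨f(e_j), f(y_S)⟩ ≥ 12ε` for `j ∈ S` and `⟨f(e_j), f(y_S)⟩ ≤ 4ε` for `j ∉ S`. -/
theorem gap_preserved (k d m : ℕ) (hk : 0 < k) (hd : k ≤ d)
    (ε : ℝ) (hε : ε = 1 / (16 * Real.sqrt k))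
    (S : Finset (Fin d)) (hS : S.card = k)
    (yS : EuclideanSpace ℝ (Fin d))
    (hyS : yS = (1 / Real.sqrt k) • ∑ j ∈ S, EuclideanSpace.single j (1 : ℝ))
    (P : Set (EuclideanSpace ℝ (Fin d)))
    (hP : P = insert 0 (insert yS
      (Set.range fun j : Fin d => EuclideanSpace.single j (1 : ℝ))))
    (f : EuclideanSpace ℝ (Fin d) → EuclideanSpace ℝ (Fin m)) (hf0 : f 0 = 0)
    (hf : ∀ x ∈ P, ∀ y ∈ P,
      (1 - ε) * ‖x - y‖ ^ 2 ≤ ‖f x - f y‖ ^ 2 ∧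
        ‖f x - f y‖ ^ 2 ≤ (1 + ε) * ‖x - y‖ ^ 2) :
    ∀ j : Fin d,
      (j ∈ S → 12 * ε ≤ ⟪f (EuclideanSpace.single j (1 : ℝ)), f yS⟫) ∧
        (j ∉ S → ⟪f (EuclideanSpace.single j (1 : ℝ)), f yS⟫ ≤ 4 * ε) := by
  have hk0 : (0:ℝ) < (k:ℝ) := by exact_mod_cast hk
  have hsk : (0:ℝ) < Real.sqrt k := Real.sqrt_pos.mpr hk0
  have hsk2 : Real.sqrt k * Real.sqrt k = (k:ℝ) := Real.mul_self_sqrt hk0.le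
  have hεpos : 0 < ε := by rw [hε]; positivity
  have h16 : 1 / Real.sqrt k = 16 * ε := by rw [hε]; field_simp
  -- membership facts
  have h0P : (0 : EuclideanSpace ℝ (Fin d)) ∈ P := by rw [hP]; exact Set.mem_insert _ _
  have hvP : yS ∈ P := by rw [hP]; exact Set.mem_insert_of_mem _ (Set.mem_insert _ _)
  intro j
  set u : EuclideanSpace ℝ (Fin d) := EuclideanSpace.single j (1 : ℝ) with hu
  have huP : u ∈ P := by
    rw [hP]; exact Set.mem_insert_of_mem _ (Set.mem_insert_of_mem _ ⟨j, rfl⟩)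
  -- norms and inner products of the original points
  have hun : ‖u‖ = 1 := by simp [hu, EuclideanSpace.norm_single]
  have hinner : ⟪u, yS⟫ = if j ∈ S then 1 / Real.sqrt k else 0 := by
    rw [hyS, inner_smul_right, inner_sum]
    simp only [hu, EuclideanSpace.inner_single_left, map_one, one_mul,
      EuclideanSpace.single_apply]
    rw [Finset.sum_ite_eq S j (fun _ => (1:ℝ))]
    by_cases hj : j ∈ S <;> simp [hj]
  have hvn : ‖yS‖ ^ 2 = 1 := by
    rw [← real_inner_self_eq_norm_sq, hyS, inner_smul_left, inner_smul_right, sum_inner]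
    simp only [inner_sum, EuclideanSpace.inner_single_left, map_one, one_mul,
      EuclideanSpace.single_apply, conj_trivial]
    have : ∀ i ∈ S, (∑ i' ∈ S, if i = i' then (1:ℝ) else 0) = 1 := by
      intro i hi
      rw [Finset.sum_ite_eq S i (fun _ => (1:ℝ))]
      simp [hi]
    rw [Finset.sum_congr rfl this]
    simp [hS]
    field_simp
    rw [Real.sq_sqrt hk0.le]
  have hdist : ‖u - yS‖ ^ 2 = 2 - 2 * ⟪u, yS⟫ := by
    rw [norm_sub_sq_real, hun, hvn]; ring
  -- bounds from hf
  have hfu := hf u huP 0 h0P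
  have hfv := hf yS hvP 0 h0P
  have hfuv := hf u huP yS hvP
  rw [hf0, sub_zero, sub_zero, hun] at hfu
  rw [hf0, sub_zero, sub_zero, hvn] at hfv
  have hip : ‖f u - f yS‖ ^ 2 = ‖f u‖ ^ 2 - 2 * ⟪f u, f yS⟫ + ‖f yS‖ ^ 2 :=
    norm_sub_sq_real _ _
  constructor
  · intro hj
    have hiv : ⟪u, yS⟫ = 16 * ε := by rw [hinner, if_pos hj, h16]
    rw [hiv] at hdist
    rw [hdist] at hfuv
    nlinarith [hfu.1, hfu.2, hfv.1, hfv.2, hfuv.1, hfuv.2, hεpos]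
  · intro hj
    have hiv : ⟪u, yS⟫ = 0 := by rw [hinner, if_neg hj]
    rw [hiv] at hdist
    rw [hdist] at hfuv
    nlinarith [hfu.1, hfu.2, hfv.1, hfv.2, hfuv.1, hfuv.2, hεpos]
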